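/- Let K satisfy the size condition and the regularity condition and let M be the associated Marcinkiewicz integral. Then there exists a constant C > 0 such that for every ball S and every b ∈ L¹(μ) with supp(b) ⊂ S and ∫_X b dμ = 0, ∫_{X\2S} M(b)(x) dμ(x) ≤ C‖b‖_{L¹(μ)}. -/

import Mathlib

open MeasureTheory Metric Set
open scoped ENNReal NNReal

namespace NonHomog

variable {X : Type*} [MetricSpace X] [MeasurableSpace X] [BorelSpace X]

/-- `(X, d, μ)` is upper doubling with dominating function `lam` and constant `Clam`,
also satisfying `lam x r ≤ Clam * lam y r` whenever `dist x y ≤ r`. -/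
structure IsUpperDoubling (μ : Measure X) (lam : X → ℝ → ℝ) (Clam : ℝ) : Prop where
  one_lt : 1 < Clam
  lam_pos : ∀ x r, 0 < r → 0 < lam x r
  lam_mono : ∀ x r s, 0 < r → r ≤ s → lam x r ≤ lam x s
  measure_ball_le : ∀ x r, 0 < r → μ (ball x r) ≤ ENNReal.ofReal (lam x r)
  lam_le : ∀ x r, 0 < r → lam x r ≤ Clam * lam x (r / 2)
  lam_comp : ∀ x y r, 0 < r → dist x y ≤ r → lam x r ≤ Clam * lam y r

/-- `(X, d)` is geometrically doubling with constant `N0`. -/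
def GeometricallyDoubling (X : Type*) [MetricSpace X] (N0 : ℕ) : Prop :=
  ∀ (x : X) (r : ℝ), 0 < r → ∃ s : Finset X, s.card ≤ N0 ∧
    ball x r ⊆ ⋃ y ∈ s, ball y (r / 2)

/-- The size condition for the kernel `K`. -/
def KernelSize (lam : X → ℝ → ℝ) (K : X → X → ℝ) (CK : ℝ) : Prop :=
  ∀ x y : X, x ≠ y → |K x y| ≤ CK * dist x y / lam x (dist x y)

/-- The regularity (Hörmander-type) condition for the kernel `K`. -/
def KernelReg (μ : Measure X) (K : X → X → ℝ) (CK : ℝ) : Prop :=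
  ∀ y y' : X,
    ∫⁻ x in {x : X | 2 * dist y y' ≤ dist x y},
      ENNReal.ofReal ((|K x y - K x y'| + |K y x - K y' x|) / dist x y) ∂μ
      ≤ ENNReal.ofReal CK

/-- The Marcinkiewicz integral associated with the kernel `K`. -/
noncomputable def marcinkiewicz (μ : Measure X) (K : X → X → ℝ) (f : X → ℝ) (x : X) : ℝ≥0∞ :=
  (∫⁻ t in Ioi (0 : ℝ),
      (ENNReal.ofReal |∫ y in {y : X | dist x y < t}, K x y * f y ∂μ|) ^ 2
        / ENNReal.ofReal (t ^ 3)) ^ (1 / 2 : ℝ)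

/-- The coefficient `δ(B, S)` for balls `B = B(cB, rB) ⊆ S = B(cS, rS)`. -/
noncomputable def delta (μ : Measure X) (lam : X → ℝ → ℝ)
    (cB : X) (rB : ℝ) (cS : X) (rS : ℝ) : ℝ :=
  ∫ x in ball cS (2 * rS) \ ball cB rB, 1 / lam cB (dist x cB) ∂μ

/-- The exponent `1/p - 1` (interpreted as `-1` when `p = ∞`). -/
noncomputable def atomExp (p : ℝ≥0∞) : ℝ := 1 / p.toReal - 1

/-- `b` is a `(p,1)_λ`-atomic block with `|b|_{H^{1,p}_atb} = ν`. -/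
def IsAtomicBlock (μ : Measure X) (lam : X → ℝ → ℝ) (ρ : ℝ) (p : ℝ≥0∞)
    (b : X → ℝ) (ν : ℝ) : Prop :=
  ∃ (cB : X) (rB : ℝ), 0 < rB ∧ Function.support b ⊆ ball cB rB ∧
    Integrable b μ ∧ (∫ x, b x ∂μ) = 0 ∧
    ∃ (κ₁ κ₂ : ℝ) (a₁ a₂ : X → ℝ) (c₁ c₂ : X) (r₁ r₂ : ℝ),
      0 < r₁ ∧ 0 < r₂ ∧
      ball c₁ r₁ ⊆ ball cB rB ∧ ball c₂ r₂ ⊆ ball cB rB ∧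
      Function.support a₁ ⊆ ball c₁ r₁ ∧ Function.support a₂ ⊆ ball c₂ r₂ ∧
      (∀ x, b x = κ₁ * a₁ x + κ₂ * a₂ x) ∧
      eLpNorm a₁ p μ ≤ μ (ball c₁ (ρ * r₁)) ^ atomExp p *
        ENNReal.ofReal ((1 + delta μ lam c₁ r₁ cB rB)⁻¹) ∧
      eLpNorm a₂ p μ ≤ μ (ball c₂ (ρ * r₂)) ^ atomExp p *
        ENNReal.ofReal ((1 + delta μ lam c₂ r₂ cB rB)⁻¹) ∧
      ν = |κ₁| + |κ₂|

/-- A building block of `H¹(μ)` : either a `(p,1)_λ`-atomic block, or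
(when `μ(X) < ∞`) the constant function `μ(X)⁻¹`, regarded as an atomic
block of norm `1`. -/
def IsH1Block (μ : Measure X) (lam : X → ℝ → ℝ) (ρ : ℝ) (p : ℝ≥0∞)
    (b : X → ℝ) (ν : ℝ) : Prop :=
  IsAtomicBlock μ lam ρ p b ν ∨
    (μ Set.univ ≠ ∞ ∧ (∀ x, b x = ((μ Set.univ).toReal)⁻¹) ∧ ν = 1)

/-- Membership in the atomic Hardy space `H¹(μ)` (with `ρ = 2`, `p = ∞`;
the space is independent of these choices). -/
def MemH1 (μ : Measure X) (lam : X → ℝ → ℝ) (f : X → ℝ) : Prop :=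
  Integrable f μ ∧ ∃ (b : ℕ → X → ℝ) (ν : ℕ → ℝ),
    (∀ j, IsH1Block μ lam 2 ⊤ (b j) (ν j)) ∧ Summable ν ∧
    ∀ᵐ x ∂μ, HasSum (fun j => b j x) (f x)

/-- The norm of `f` in the atomic Hardy space `H¹(μ)`. -/
noncomputable def H1norm (μ : Measure X) (lam : X → ℝ → ℝ) (f : X → ℝ) : ℝ :=
  sInf { s : ℝ | ∃ (b : ℕ → X → ℝ) (ν : ℕ → ℝ),
    (∀ j, IsH1Block μ lam 2 ⊤ (b j) (ν j)) ∧ Summable ν ∧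
    (∀ᵐ x ∂μ, HasSum (fun j => b j x) (f x)) ∧ s = ∑' j, ν j }

/-- `f` is a finite linear combination of `(p,1)_λ`-atomic blocks. -/
def MemH1fin (μ : Measure X) (lam : X → ℝ → ℝ) (ρ : ℝ) (p : ℝ≥0∞) (f : X → ℝ) : Prop :=
  ∃ (N : ℕ) (b : Fin N → X → ℝ) (ν : Fin N → ℝ),
    (∀ j, IsAtomicBlock μ lam ρ p (b j) (ν j)) ∧ ∀ x, f x = ∑ j, b j x

/-- The norm in the finite atomic Hardy space `H^{1,p}_fin(μ)`. -/
noncomputable def H1finNorm (μ : Measure X) (lam : X → ℝ → ℝ) (ρ : ℝ) (p : ℝ≥0∞)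
    (f : X → ℝ) : ℝ :=
  sInf { s : ℝ | ∃ (N : ℕ) (b : Fin N → X → ℝ) (ν : Fin N → ℝ),
    (∀ j, IsAtomicBlock μ lam ρ p (b j) (ν j)) ∧ (∀ x, f x = ∑ j, b j x) ∧
    s = ∑ j, ν j }

/-- `C` is an admissible `RBMO(μ)` constant for `f` (with `ρ = 2`). -/
def RBMOBound (μ : Measure X) (lam : X → ℝ → ℝ) (f : X → ℝ) (C : ℝ) : Prop :=
  ∃ fB : X → ℝ → ℝ,
    (∀ (c : X) (r : ℝ), 0 < r →
      ∫ x in ball c r, |f x - fB c r| ∂μ ≤ C * (μ (ball c (2 * r))).toReal) ∧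
    (∀ (cB : X) (rB : ℝ) (cS : X) (rS : ℝ), 0 < rB → 0 < rS →
      ball cB rB ⊆ ball cS rS →
      |fB cB rB - fB cS rS| ≤ C * (1 + delta μ lam cB rB cS rS))

/-- Membership in `RBMO(μ)`. -/
def MemRBMO (μ : Measure X) (lam : X → ℝ → ℝ) (f : X → ℝ) : Prop :=
  LocallyIntegrable f μ ∧ ∃ C : ℝ, 0 ≤ C ∧ RBMOBound μ lam f C

/-- The `RBMO(μ)` norm. -/
noncomputable def RBMONorm (μ : Measure X) (lam : X → ℝ → ℝ) (f : X → ℝ) : ℝ :=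
  sInf { C : ℝ | 0 ≤ C ∧ RBMOBound μ lam f C }

/-- The ball `B(c, r)` is `(α, β)`-doubling. -/
def IsDoublingBall (μ : Measure X) (α β : ℝ) (c : X) (r : ℝ) : Prop :=
  μ (ball c (α * r)) ≤ ENNReal.ofReal β * μ (ball c r)

/-- `β_α = α^{3 max(n,ν)} + 30^n + 30^ν` with `n = log₂ N₀`, `ν = log₂ C_λ`. -/
noncomputable def betaCoef (Clam : ℝ) (N0 : ℕ) (α : ℝ) : ℝ :=
  α ^ (3 * max (Real.logb 2 (N0 : ℝ)) (Real.logb 2 Clam)) +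
    (30 : ℝ) ^ (Real.logb 2 (N0 : ℝ)) + (30 : ℝ) ^ (Real.logb 2 Clam)

/-- `α^j B(c,r)` is the smallest `(α, β)`-doubling ball of the form `α^i B(c,r)`, `i ∈ ℕ`. -/
def IsSmallestDoubling (μ : Measure X) (α β : ℝ) (c : X) (r : ℝ) (j : ℕ) : Prop :=
  1 ≤ j ∧ IsDoublingBall μ α β c (α ^ j * r) ∧
    ∀ i : ℕ, 1 ≤ i → i < j → ¬ IsDoublingBall μ α β c (α ^ i * r)

/-- The mean `m_B(f)` of `f` over the ball `B(c,r)`. -/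
noncomputable def ballAvg (μ : Measure X) (f : X → ℝ) (c : X) (r : ℝ) : ℝ :=
  (∫ x in ball c r, f x ∂μ) / (μ (ball c r)).toReal

/-- `C` is an admissible `RBLO(μ)` constant for `f`, with parameters `η, ρ`. -/
def RBLOBound (μ : Measure X) (lam : X → ℝ → ℝ) (Clam : ℝ) (N0 : ℕ) (η ρ : ℝ)
    (f : X → ℝ) (C : ℝ) : Prop :=
  (∀ (c : X) (r : ℝ) (j : ℕ), 0 < r →
      IsSmallestDoubling μ ρ (betaCoef Clam N0 ρ) c r j →
      ∫ x in ball c r, (f x - essInf f (μ.restrict (ball c (ρ ^ j * r)))) ∂μ ≤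
        C * (μ (ball c (η * r))).toReal) ∧
  (∀ (cB : X) (rB : ℝ) (cS : X) (rS : ℝ), 0 < rB → 0 < rS →
      ball cB rB ⊆ ball cS rS →
      IsDoublingBall μ ρ (betaCoef Clam N0 ρ) cB rB →
      IsDoublingBall μ ρ (betaCoef Clam N0 ρ) cS rS →
      essInf f (μ.restrict (ball cB rB)) - essInf f (μ.restrict (ball cS rS)) ≤
        C * (1 + delta μ lam cB rB cS rS))

/-- Membership in `RBLO(μ)` (with `η = ρ = 2`; the space is independent of these choices). -/
def MemRBLO (μ : Measure X) (lam : X → ℝ → ℝ) (Clam : ℝ) (N0 : ℕ) (f : X → ℝ) : Prop :=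
  LocallyIntegrable f μ ∧ ∃ C : ℝ, 0 ≤ C ∧ RBLOBound μ lam Clam N0 2 2 f C

/-- The `RBLO(μ)` norm. -/
noncomputable def RBLONorm (μ : Measure X) (lam : X → ℝ → ℝ) (Clam : ℝ) (N0 : ℕ)
    (f : X → ℝ) : ℝ :=
  sInf { C : ℝ | 0 ≤ C ∧ RBLOBound μ lam Clam N0 2 2 f C }

/-- The non-centered doubling Hardy–Littlewood maximal function `N(f)`,
taken over `(6, β)`-doubling balls. -/
noncomputable def maxN (μ : Measure X) (β : ℝ) (f : X → ℝ) (x : X) : ℝ≥0∞ :=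
  ⨆ (c : X) (r : ℝ) (_ : 0 < r) (_ : x ∈ ball c r) (_ : IsDoublingBall μ 6 β c r),
    (∫⁻ y in ball c r, ENNReal.ofReal |f y| ∂μ) / μ (ball c r)

/-- The sharp maximal function `M♯(f)`. -/
noncomputable def sharpM (μ : Measure X) (lam : X → ℝ → ℝ) (Clam : ℝ) (N0 : ℕ)
    (f : X → ℝ) (x : X) : ℝ≥0∞ :=
  (⨆ (c : X) (r : ℝ) (j : ℕ) (_ : 0 < r) (_ : x ∈ ball c r)
      (_ : IsSmallestDoubling μ 6 (betaCoef Clam N0 6) c r j),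
    (∫⁻ y in ball c r, ENNReal.ofReal |f y - ballAvg μ f c (6 ^ j * r)| ∂μ) /
      μ (ball c (5 * r))) +
  ⨆ (cB : X) (rB : ℝ) (cS : X) (rS : ℝ) (_ : 0 < rB) (_ : 0 < rS)
      (_ : x ∈ ball cB rB) (_ : ball cB rB ⊆ ball cS rS)
      (_ : IsDoublingBall μ 6 (betaCoef Clam N0 6) cB rB)
      (_ : IsDoublingBall μ 6 (betaCoef Clam N0 6) cS rS),
    ENNReal.ofReal (|ballAvg μ f cB rB - ballAvg μ f cS rS| /
      (1 + delta μ lam cB rB cS rS))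

/-- The `L^p(μ)`-"norm" of an `ℝ≥0∞`-valued function. -/
noncomputable def lpNormE (μ : Measure X) (p : ℝ) (g : X → ℝ≥0∞) : ℝ≥0∞ :=
  (∫⁻ x, g x ^ p ∂μ) ^ (1 / p)

end NonHomog

namespace NonHomog

/-- `C1` is an admissible constant in the `RBLO(μ)` characterization of Lemma 2.3,
relative to `(ρ, β_ρ)`-doubling balls. -/
def RBLOChar {X : Type*} [MetricSpace X] [MeasurableSpace X]
    (μ : Measure X) (lam : X → ℝ → ℝ) (Clam : ℝ) (N0 : ℕ) (ρ : ℝ)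
    (f : X → ℝ) (C1 : ℝ) : Prop :=
  (∀ (c : X) (r : ℝ), 0 < r → IsDoublingBall μ ρ (betaCoef Clam N0 ρ) c r →
    ∫ x in ball c r, (f x - essInf f (μ.restrict (ball c r))) ∂μ ≤
      C1 * (μ (ball c r)).toReal) ∧
  (∀ (cB : X) (rB : ℝ) (cS : X) (rS : ℝ), 0 < rB → 0 < rS →
    ball cB rB ⊆ ball cS rS →
    IsDoublingBall μ ρ (betaCoef Clam N0 ρ) cB rB →
    IsDoublingBall μ ρ (betaCoef Clam N0 ρ) cS rS →
    ballAvg μ f cB rB - ballAvg μ f cS rS ≤ C1 * (1 + delta μ lam cB rB cS rS))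

end NonHomog
namespace NonHomog

private lemma sq_rpow_half (x : ℝ≥0∞) : (x ^ 2) ^ (1 / 2 : ℝ) = x := by
  rw [← ENNReal.rpow_natCast x 2, ← ENNReal.rpow_mul]
  norm_num

set_option maxHeartbeats 2000000 in
/-- Key pointwise + integrated estimate, for measurable `b`. -/
private lemma marcinkiewicz_key
    {X : Type*} [MetricSpace X] [MeasurableSpace X] [BorelSpace X]
    (μ : Measure X) (lam : X → ℝ → ℝ) (Clam : ℝ)
    (K : X → X → ℝ) (CK : ℝ) (hCK : 0 < CK)
    (hUD : IsUpperDoubling μ lam Clam)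
    (hK : Measurable (Function.uncurry K))
    (hsize : KernelSize lam K CK) (hreg : KernelReg μ K CK)
    (cS : X) (rS : ℝ) (hr : 0 < rS)
    (b : X → ℝ) (hbm : Measurable b) (hbi : Integrable b μ)
    (hbs : Function.support b ⊆ ball cS rS) (hb0 : (∫ x, b x ∂μ) = 0) :
    ∫⁻ x in (ball cS (2 * rS))ᶜ, marcinkiewicz μ K b x ∂μ ≤
      ENNReal.ofReal (12 * CK * Clam ^ 4 + CK) * ∫⁻ x, ENNReal.ofReal |b x| ∂μ := by
  classical
  have hClam1 : 1 < Clam := hUD.one_lt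
  have hClam0 : (0 : ℝ) < Clam := by linarith
  have hSF : SigmaFinite μ := by
    refine ⟨⟨⟨fun n => ball cS (n + 1), fun _ => trivial, fun n => ?_, ?_⟩⟩⟩
    · exact lt_of_le_of_lt (hUD.measure_ball_le _ _ (by positivity)) ENNReal.ofReal_lt_top
    · refine eq_univ_of_forall fun x => mem_iUnion.2 ⟨⌈dist x cS⌉₊, ?_⟩
      exact mem_ball.2 (lt_of_le_of_lt (Nat.le_ceil _) (by linarith [Nat.le_ceil (dist x cS)]))
  set L := ∫⁻ x, ENNReal.ofReal |b x| ∂μ with hLdef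
  have hL_top : L ≠ ∞ := by
    have h := hbi.hasFiniteIntegral
    rw [HasFiniteIntegral] at h
    have : L = ∫⁻ x, (‖b x‖₊ : ℝ≥0∞) ∂μ := by
      simp only [hLdef, ← Real.enorm_eq_ofReal_abs, enorm_eq_nnnorm]
    rw [this]; exact h.ne
  set s : Set X := (ball cS (2 * rS))ᶜ with hsdef
  set ψ : X → ℝ := fun x =>
    6 * CK * Clam * Real.sqrt (rS / dist x cS) / lam x (dist x cS) with hψdef
  set Tail : X → ℝ≥0∞ := fun x =>
    (∫⁻ y, ENNReal.ofReal (|K x y - K x cS| * |b y|) ∂μ) *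
      ENNReal.ofReal ((dist x cS)⁻¹) with hTdef
  -- the pointwise estimate
  have key_pt : ∀ x ∈ s, marcinkiewicz μ K b x ≤ L * ENNReal.ofReal (ψ x) + Tail x := by
    intro x hx
    have hd2r : 2 * rS ≤ dist x cS := not_lt.1 fun h => hx (mem_ball.2 h)
    set d := dist x cS with hdd
    have hd_pos : 0 < d := lt_of_lt_of_le (by positivity) hd2r
    have hr_le : rS ≤ d / 2 := by linarith
    set A := ∫⁻ y, ENNReal.ofReal |K x y * b y| ∂μ with hAdef
    set B := ∫⁻ y, ENNReal.ofReal (|K x y - K x cS| * |b y|) ∂μ with hBdef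
    set F : ℝ → ℝ≥0∞ := fun t =>
      (ENNReal.ofReal |∫ y in {y : X | dist x y < t}, K x y * b y ∂μ|) ^ 2
        / ENNReal.ofReal (t ^ 3) with hFdef
    set G : ℝ → ℝ≥0∞ := fun t =>
      (Ioc (d - rS) (d + rS)).indicator
        (fun _ => A ^ 2 * (ENNReal.ofReal ((d / 2) ^ 3))⁻¹) t +
      (Ioi (d + rS)).indicator (fun t => B ^ 2 / ENNReal.ofReal (t ^ 3)) t with hGdef
    have hFG : ∀ t ∈ Ioi (0 : ℝ), F t ≤ G t := by
      intro t ht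
      rcases le_or_gt t (d - rS) with h1 | h1
      · -- inner integral vanishes
        have hI0 : (∫ y in {y : X | dist x y < t}, K x y * b y ∂μ) = 0 := by
          refine setIntegral_eq_zero_of_forall_eq_zero fun y hy => ?_
          have hb0y : b y = 0 := by
            by_contra h
            have h2 : dist y cS < rS := mem_ball.1 (hbs h)
            have h3 : d ≤ dist x y + dist y cS := dist_triangle x y cS
            have h4 : dist x y < t := hy
            linarith
          simp [hb0y]
        simp only [hFdef, hI0, abs_zero, ENNReal.ofReal_zero]
        simpa using zero_le (G t)
      rcases le_or_gt t (d + rS) with h2 | h2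
      · -- middle range
        have hcrude : (ENNReal.ofReal |∫ y in {y : X | dist x y < t}, K x y * b y ∂μ|) ≤ A := by
          rw [← Real.enorm_eq_ofReal_abs]
          refine (enorm_integral_le_lintegral_enorm _).trans ?_
          refine (setLIntegral_le_lintegral _ _).trans (le_of_eq ?_)
          exact lintegral_congr fun y => Real.enorm_eq_ofReal_abs _
        have hFle : F t ≤ A ^ 2 * (ENNReal.ofReal ((d / 2) ^ 3))⁻¹ := by
          simp only [hFdef]
          rw [div_eq_mul_inv]
          exact mul_le_mul' (pow_le_pow_left' hcrude 2)
            (ENNReal.inv_le_inv.mpr (ENNReal.ofReal_le_ofReal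
              (pow_le_pow_left₀ (by positivity) (by linarith) 3)))
        calc F t ≤ A ^ 2 * (ENNReal.ofReal ((d / 2) ^ 3))⁻¹ := hFle
          _ = (Ioc (d - rS) (d + rS)).indicator
              (fun _ => A ^ 2 * (ENNReal.ofReal ((d / 2) ^ 3))⁻¹) t := by
            rw [Set.indicator_of_mem (show t ∈ Ioc (d - rS) (d + rS) from ⟨h1, h2⟩)]
          _ ≤ G t := le_self_add
      · -- far range: use cancellation
        have hIeq : (∫ y in {y : X | dist x y < t}, K x y * b y ∂μ)
            = ∫ y, (K x y - K x cS) * b y ∂μ := by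
          have hset : ∀ y ∉ {y : X | dist x y < t}, K x y * b y = 0 := by
            intro y hy
            have hb0y : b y = 0 := by
              by_contra h
              have h3 : dist y cS < rS := mem_ball.1 (hbs h)
              have h4 : dist x y ≤ d + dist y cS := dist_triangle_right x y cS
              have : dist x y < t := by linarith
              exact hy this
            simp [hb0y]
          rw [setIntegral_eq_integral_of_forall_compl_eq_zero hset]
          by_cases hg : Integrable (fun y => K x y * b y) μ
          · have hrew : (fun y => (K x y - K x cS) * b y)
                = fun y => K x y * b y - K x cS * b y := funext fun y => by ring
            rw [hrew, integral_sub hg (hbi.const_mul _), integral_const_mul, hb0,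
              mul_zero, sub_zero]
          · have hgc : ¬ Integrable (fun y => (K x y - K x cS) * b y) μ := by
              intro hgc
              apply hg
              have h5 := hgc.add (hbi.const_mul (K x cS))
              refine h5.congr (ae_of_all _ fun y => ?_)
              simp only [Pi.add_apply]
              ring
            rw [integral_undef hg, integral_undef hgc]
        have hcrude : (ENNReal.ofReal |∫ y in {y : X | dist x y < t}, K x y * b y ∂μ|) ≤ B := by
          rw [hIeq, ← Real.enorm_eq_ofReal_abs]
          refine (enorm_integral_le_lintegral_enorm _).trans (le_of_eq ?_)
          exact lintegral_congr fun y => by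
            rw [Real.enorm_eq_ofReal_abs, abs_mul]
        have hFle : F t ≤ B ^ 2 / ENNReal.ofReal (t ^ 3) := by
          simp only [hFdef]
          gcongr
        calc F t ≤ B ^ 2 / ENNReal.ofReal (t ^ 3) := hFle
          _ = (Ioi (d + rS)).indicator (fun t => B ^ 2 / ENNReal.ofReal (t ^ 3)) t := by
            rw [Set.indicator_of_mem (show t ∈ Ioi (d + rS) from h2)]
          _ ≤ G t := le_add_self
    -- integrate the bound in `t`
    have hsplit : ∫⁻ t in Ioi (0 : ℝ), F t ≤
        A ^ 2 * (ENNReal.ofReal ((d / 2) ^ 3))⁻¹ * ENNReal.ofReal (2 * rS) +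
        B ^ 2 * ENNReal.ofReal (d⁻¹ * d⁻¹) := by
      refine (setLIntegral_mono' measurableSet_Ioi hFG).trans ?_
      refine (setLIntegral_le_lintegral _ _).trans ?_
      rw [hGdef, lintegral_add_left (measurable_const.indicator measurableSet_Ioc),
        lintegral_indicator measurableSet_Ioc, lintegral_indicator measurableSet_Ioi]
      gcongr
      · rw [setLIntegral_const, Real.volume_Ioc,
          show d + rS - (d - rS) = 2 * rS by ring]
      · -- tail integral of t ^ (-3)
        have hT'pos : 0 < d + rS := by linarith
        have heqfun : EqOn (fun t : ℝ => ((t : ℝ) ^ 3)⁻¹) (fun t : ℝ => t ^ (-3 : ℝ))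
            (Ioi (d + rS)) := by
          intro t ht
          have ht0 : 0 < t := lt_trans hT'pos ht
          simp only
          rw [show (-3 : ℝ) = -((3 : ℕ) : ℝ) by norm_num, Real.rpow_neg ht0.le,
            Real.rpow_natCast]
        have hmeas : Measurable fun t : ℝ => ENNReal.ofReal ((t ^ 3)⁻¹) :=
          ((measurable_id.pow_const 3).inv).ennreal_ofReal
        have hcong : ∫⁻ t in Ioi (d + rS), B ^ 2 / ENNReal.ofReal (t ^ 3) ∂volume
            = ∫⁻ t in Ioi (d + rS), B ^ 2 * ENNReal.ofReal ((t ^ 3)⁻¹) ∂volume := by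
          refine setLIntegral_congr_fun measurableSet_Ioi (fun t ht => ?_)
          have ht0 : 0 < t := lt_trans hT'pos ht
          rw [div_eq_mul_inv, ENNReal.ofReal_inv_of_pos (by positivity)]
        rw [hcong, lintegral_const_mul _ hmeas]
        gcongr
        have hint : IntegrableOn (fun t : ℝ => ((t : ℝ) ^ 3)⁻¹) (Ioi (d + rS)) :=
          (integrableOn_Ioi_rpow_of_lt (by norm_num) hT'pos).congr_fun
            heqfun.symm measurableSet_Ioi
        have hnn : 0 ≤ᵐ[volume.restrict (Ioi (d + rS))] fun t : ℝ => ((t : ℝ) ^ 3)⁻¹ := by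
          filter_upwards [ae_restrict_mem measurableSet_Ioi] with t ht
          have ht0 : 0 < t := lt_trans hT'pos ht
          positivity
        rw [← ofReal_integral_eq_lintegral_ofReal hint hnn]
        apply ENNReal.ofReal_le_ofReal
        rw [setIntegral_congr_fun measurableSet_Ioi heqfun,
          integral_Ioi_rpow_of_lt (by norm_num) hT'pos]
        have h1 : ((-3 : ℝ) + 1) = -2 := by norm_num
        rw [h1]
        have h2 : (d + rS) ^ (-2 : ℝ) = ((d + rS) ^ 2)⁻¹ := by
          rw [← Real.rpow_natCast (d + rS) 2, ← Real.rpow_neg hT'pos.le]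
          norm_num
        rw [h2]
        have h3 : ((d + rS) ^ 2)⁻¹ ≤ (d ^ 2)⁻¹ := by
          apply inv_anti₀ (by positivity)
          nlinarith
        have h4 : d⁻¹ * d⁻¹ = (d ^ 2)⁻¹ := by
          rw [sq, mul_inv]
        rw [h4]
        calc -((d + rS) ^ 2)⁻¹ / (-2) = ((d + rS) ^ 2)⁻¹ / 2 := by ring
          _ ≤ ((d + rS) ^ 2)⁻¹ := half_le_self (by positivity)
          _ ≤ (d ^ 2)⁻¹ := h3
    -- the kernel size bound on A
    have hlamd : 0 < lam x d := hUD.lam_pos _ _ hd_pos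
    have hA : A ≤ ENNReal.ofReal (3 / 2 * CK * Clam * d / lam x d) * L := by
      rw [hLdef, ← lintegral_const_mul' _ _ ENNReal.ofReal_ne_top]
      refine lintegral_mono fun y => ?_
      rw [← ENNReal.ofReal_mul (by positivity)]
      apply ENNReal.ofReal_le_ofReal
      rw [abs_mul]
      by_cases hby : b y = 0
      · simp [hby]
      · have hyb : dist y cS < rS := mem_ball.1 (hbs hby)
        have hxy_ge : d - rS ≤ dist x y := by
          have := dist_triangle x y cS; linarith
        have hxy_le : dist x y ≤ d + rS := by
          have := dist_triangle_right x y cS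
          linarith
        have hxy_pos : 0 < dist x y := by linarith
        have hne : x ≠ y := by
          intro h; rw [h] at hxy_pos; simp at hxy_pos
        have hp1 : 0 < lam x (d / 2) := hUD.lam_pos _ _ (by positivity)
        have hp2 : 0 < lam x (dist x y) := hUD.lam_pos _ _ hxy_pos
        have hKb : |K x y| ≤ 3 / 2 * CK * Clam * d / lam x d := by
          calc |K x y| ≤ CK * dist x y / lam x (dist x y) := hsize x y hne
            _ ≤ CK * (3 / 2 * d) / lam x (d / 2) := by
              apply div_le_div₀ (by positivity) ?_ hp1
                (hUD.lam_mono x _ _ (by positivity) (by linarith))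
              nlinarith
            _ ≤ 3 / 2 * CK * Clam * d / lam x d := by
              rw [div_le_div_iff₀ hp1 hlamd]
              have h3 := hUD.lam_le x d hd_pos
              have h4 := mul_le_mul_of_nonneg_left h3
                (by positivity : (0:ℝ) ≤ 3 / 2 * CK * d)
              nlinarith
        exact mul_le_mul_of_nonneg_right hKb (abs_nonneg _)
    -- assemble
    have hm : marcinkiewicz μ K b x = (∫⁻ t in Ioi (0 : ℝ), F t) ^ (1 / 2 : ℝ) := rfl
    rw [hm]
    have step1 : (∫⁻ t in Ioi (0 : ℝ), F t) ^ (1 / 2 : ℝ) ≤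
        (A ^ 2 * (ENNReal.ofReal ((d / 2) ^ 3))⁻¹ * ENNReal.ofReal (2 * rS)) ^ (1 / 2 : ℝ) +
        (B ^ 2 * ENNReal.ofReal (d⁻¹ * d⁻¹)) ^ (1 / 2 : ℝ) := by
      refine le_trans ?_ (ENNReal.rpow_add_le_add_rpow _ _ (by norm_num) (by norm_num))
      exact ENNReal.rpow_le_rpow hsplit (by norm_num)
    refine step1.trans (add_le_add ?_ ?_)
    · -- first piece
      have hcomb : (ENNReal.ofReal ((d / 2) ^ 3))⁻¹ * ENNReal.ofReal (2 * rS)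
          = ENNReal.ofReal (16 * rS / d ^ 3) := by
        rw [← ENNReal.ofReal_inv_of_pos (by positivity), ← ENNReal.ofReal_mul (by positivity)]
        congr 1
        field_simp
        ring
      rw [mul_assoc, hcomb, ENNReal.mul_rpow_of_nonneg _ _ (by norm_num), sq_rpow_half,
        ENNReal.ofReal_rpow_of_nonneg (by positivity) (by norm_num)]
      have hrew : (16 * rS / d ^ 3) ^ (1 / 2 : ℝ) = 4 * Real.sqrt (rS / d ^ 3) := by
        rw [← Real.sqrt_eq_rpow]
        rw [show 16 * rS / d ^ 3 = 16 * (rS / d ^ 3) by ring,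
          Real.sqrt_mul (by norm_num : (0:ℝ) ≤ 16),
          show (16 : ℝ) = 4 ^ 2 by norm_num, Real.sqrt_sq (by norm_num : (0:ℝ) ≤ 4)]
      rw [hrew]
      calc A * ENNReal.ofReal (4 * Real.sqrt (rS / d ^ 3))
          ≤ ENNReal.ofReal (3 / 2 * CK * Clam * d / lam x d) * L *
              ENNReal.ofReal (4 * Real.sqrt (rS / d ^ 3)) := by gcongr
        _ = L * ENNReal.ofReal (ψ x) := by
            have hid : d * Real.sqrt (rS / d ^ 3) = Real.sqrt (rS / d) := by
              rw [← Real.sqrt_sq hd_pos.le, ← Real.sqrt_mul (by positivity)]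
              congr 1
              rw [Real.sqrt_sq hd_pos.le]
              field_simp
            have hψx : ψ x = 3 / 2 * CK * Clam * d / lam x d *
                (4 * Real.sqrt (rS / d ^ 3)) := by
              simp only [hψdef, ← hdd]
              rw [show 3 / 2 * CK * Clam * d / lam x d * (4 * Real.sqrt (rS / d ^ 3))
                  = 6 * CK * Clam * (d * Real.sqrt (rS / d ^ 3)) / lam x d by ring, hid]
            rw [hψx, ENNReal.ofReal_mul
              (show (0:ℝ) ≤ 3 / 2 * CK * Clam * d / lam x d by positivity)]
            ring
    · -- second piece
      rw [ENNReal.mul_rpow_of_nonneg _ _ (by norm_num), sq_rpow_half,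
        ENNReal.ofReal_rpow_of_nonneg (by positivity) (by norm_num)]
      simp only [hTdef]
      rw [← hdd, ← hBdef]
      gcongr
      rw [show d⁻¹ * d⁻¹ = (d⁻¹) ^ 2 by ring, ← Real.sqrt_eq_rpow,
        Real.sqrt_sq (by positivity)]
  -- now integrate over `s`
  have hsm : MeasurableSet s := (isOpen_ball.measurableSet).compl
  have hTail_meas : Measurable Tail := by
    apply Measurable.mul ?_
      ((continuous_id.dist continuous_const).measurable.inv.ennreal_ofReal)
    · apply Measurable.lintegral_prod_right
      apply ENNReal.measurable_ofReal.comp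
      exact (((hK.sub (hK.comp ((measurable_fst.prodMk measurable_const)))).abs).mul
        ((hbm.comp measurable_snd).abs))
  calc ∫⁻ x in s, marcinkiewicz μ K b x ∂μ
      ≤ ∫⁻ x in s, (L * ENNReal.ofReal (ψ x) + Tail x) ∂μ := by
        apply lintegral_mono_ae
        filter_upwards [ae_restrict_mem hsm] with x hx using key_pt x hx
    _ = (∫⁻ x in s, L * ENNReal.ofReal (ψ x) ∂μ) + ∫⁻ x in s, Tail x ∂μ :=
        lintegral_add_right' _ hTail_meas.aemeasurable
    _ ≤ L * ENNReal.ofReal (12 * CK * Clam ^ 4) + ENNReal.ofReal CK * L := by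
        gcongr
        · -- annuli estimate
          rw [lintegral_const_mul' _ _ hL_top]
          refine mul_le_mul_of_nonneg_left ?_ zero_le
          have hcover : s ⊆ ⋃ k : ℕ, (ball cS (4 ^ (k + 1) * rS) \ ball cS (4 ^ k * rS)) := by
            intro x hx
            have hd2r : 2 * rS ≤ dist x cS := not_lt.1 fun h => hx (mem_ball.2 h)
            have hex : ∃ n : ℕ, dist x cS < 4 ^ (n + 1) * rS := by
              obtain ⟨n, hn⟩ := pow_unbounded_of_one_lt (dist x cS / rS)
                (by norm_num : (1 : ℝ) < 4)
              refine ⟨n, ?_⟩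
              rw [div_lt_iff₀ hr] at hn
              have h2 : (4 : ℝ) ^ n * rS ≤ 4 ^ (n + 1) * rS := by
                apply mul_le_mul_of_nonneg_right ?_ hr.le
                apply pow_le_pow_right₀ (by norm_num) (by omega)
              linarith
            refine mem_iUnion.2 ⟨Nat.find hex, Nat.find_spec hex, fun hmem => ?_⟩
            have hlt : dist x cS < 4 ^ Nat.find hex * rS := mem_ball.1 hmem
            rcases Nat.eq_zero_or_pos (Nat.find hex) with h0 | h0
            · rw [h0] at hlt; simp at hlt; linarith
            · obtain ⟨j, hj⟩ := Nat.exists_eq_add_of_lt h0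
              have := Nat.find_min hex (m := j) (by omega)
              rw [show j + 1 = Nat.find hex by omega] at this
              exact this hlt
          refine (lintegral_mono_set hcover).trans ((lintegral_iUnion_le _ _).trans ?_)
          have hann : ∀ k : ℕ,
              ∫⁻ x in (ball cS (4 ^ (k + 1) * rS) \ ball cS (4 ^ k * rS)),
                ENNReal.ofReal (ψ x) ∂μ ≤
              ENNReal.ofReal (6 * CK * Clam ^ 4) * ENNReal.ofReal 2⁻¹ ^ k := by
            intro k
            set R := (4 : ℝ) ^ (k + 1) * rS with hRdef
            have hRpos : 0 < R := by positivity
            have hlamR : 0 < lam cS R := hUD.lam_pos _ _ hRpos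
            have hmeasAnn : MeasurableSet (ball cS R \ ball cS (4 ^ k * rS)) :=
              isOpen_ball.measurableSet.diff isOpen_ball.measurableSet
            have hbound : ∀ x ∈ ball cS R \ ball cS (4 ^ k * rS),
                ψ x ≤ 6 * CK * Clam ^ 4 * 2⁻¹ ^ k / lam cS R := by
              intro x hx
              set dd := dist x cS with hdddef
              have hd1 : 4 ^ k * rS ≤ dd := not_lt.1 fun h => hx.2 (mem_ball.2 h)
              have hd2 : dd < R := mem_ball.1 hx.1
              have hdpos : 0 < dd := lt_of_lt_of_le (by positivity) hd1
              have hlamd : 0 < lam x dd := hUD.lam_pos _ _ hdpos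
              have hsqrt : Real.sqrt (rS / dd) ≤ 2⁻¹ ^ k := by
                have h1 : rS / dd ≤ (2⁻¹ ^ k : ℝ) ^ 2 := by
                  have h2 : rS / dd ≤ rS / (4 ^ k * rS) :=
                    div_le_div_of_nonneg_left hr.le (by positivity) hd1
                  have h4 : ((2:ℝ)⁻¹ ^ k) ^ 2 = (4:ℝ)⁻¹ ^ k := by
                    rw [← pow_mul, mul_comm, pow_mul]
                    norm_num
                  have h3 : rS / (4 ^ k * rS) = ((2 : ℝ)⁻¹ ^ k) ^ 2 := by
                    rw [h4, mul_comm, ← div_div, div_self hr.ne', one_div, inv_pow]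
                  linarith [h3 ▸ h2]
                calc Real.sqrt (rS / dd) ≤ Real.sqrt ((2⁻¹ ^ k : ℝ) ^ 2) :=
                      Real.sqrt_le_sqrt h1
                  _ = 2⁻¹ ^ k := Real.sqrt_sq (by positivity)
              have hchain : lam cS R ≤ Clam ^ 3 * lam x dd := by
                have h1 : lam cS R ≤ Clam * lam x R := by
                  apply hUD.lam_comp cS x R hRpos
                  rw [dist_comm]; exact hd2.le
                have h2 : lam x R ≤ Clam * lam x (R / 2) := hUD.lam_le x R hRpos
                have h3 : lam x (R / 2) ≤ Clam * lam x (R / 2 / 2) :=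
                  hUD.lam_le x (R / 2) (by positivity)
                have h4 : lam x (R / 2 / 2) ≤ lam x dd := by
                  apply hUD.lam_mono x _ _ (by positivity)
                  have : R / 2 / 2 = 4 ^ k * rS := by
                    rw [hRdef, pow_succ]; ring
                  rw [this]; exact hd1
                calc lam cS R ≤ Clam * lam x R := h1
                  _ ≤ Clam * (Clam * lam x (R / 2)) :=
                      mul_le_mul_of_nonneg_left h2 hClam0.le
                  _ ≤ Clam * (Clam * (Clam * lam x (R / 2 / 2))) :=
                      mul_le_mul_of_nonneg_left
                        (mul_le_mul_of_nonneg_left h3 hClam0.le) hClam0.le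
                  _ ≤ Clam * (Clam * (Clam * lam x dd)) :=
                      mul_le_mul_of_nonneg_left (mul_le_mul_of_nonneg_left
                        (mul_le_mul_of_nonneg_left h4 hClam0.le) hClam0.le) hClam0.le
                  _ = Clam ^ 3 * lam x dd := by ring
              rw [hψdef]
              simp only [← hdddef]
              rw [div_le_div_iff₀ hlamd hlamR]
              have hs0 : 0 ≤ Real.sqrt (rS / dd) := Real.sqrt_nonneg _
              have hstep1 : 6 * CK * Clam * Real.sqrt (rS / dd) * lam cS R ≤
                  6 * CK * Clam * Real.sqrt (rS / dd) * (Clam ^ 3 * lam x dd) :=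
                mul_le_mul_of_nonneg_left hchain (by positivity)
              have hstep2 : 6 * CK * Clam * Real.sqrt (rS / dd) * (Clam ^ 3 * lam x dd) ≤
                  6 * CK * Clam * 2⁻¹ ^ k * (Clam ^ 3 * lam x dd) := by
                apply mul_le_mul_of_nonneg_right ?_ (by positivity)
                exact mul_le_mul_of_nonneg_left hsqrt (by positivity)
              nlinarith [hstep1, hstep2]
            calc ∫⁻ x in ball cS R \ ball cS (4 ^ k * rS), ENNReal.ofReal (ψ x) ∂μ
                ≤ ∫⁻ _ in ball cS R \ ball cS (4 ^ k * rS),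
                    ENNReal.ofReal (6 * CK * Clam ^ 4 * 2⁻¹ ^ k / lam cS R) ∂μ :=
                  setLIntegral_mono' hmeasAnn fun x hx =>
                    ENNReal.ofReal_le_ofReal (hbound x hx)
              _ = ENNReal.ofReal (6 * CK * Clam ^ 4 * 2⁻¹ ^ k / lam cS R) *
                    μ (ball cS R \ ball cS (4 ^ k * rS)) := setLIntegral_const _ _
              _ ≤ ENNReal.ofReal (6 * CK * Clam ^ 4 * 2⁻¹ ^ k / lam cS R) *
                    ENNReal.ofReal (lam cS R) := by
                  gcongr
                  exact (measure_mono diff_subset).trans (hUD.measure_ball_le _ _ hRpos)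
              _ = ENNReal.ofReal (6 * CK * Clam ^ 4) * ENNReal.ofReal 2⁻¹ ^ k := by
                  rw [← ENNReal.ofReal_mul (div_nonneg (by positivity) hlamR.le),
                    div_mul_cancel₀ _ hlamR.ne',
                    ← ENNReal.ofReal_pow (by norm_num : (0:ℝ) ≤ 2⁻¹),
                    ← ENNReal.ofReal_mul (by positivity)]
          have h2inv : ENNReal.ofReal 2⁻¹ = (2 : ℝ≥0∞)⁻¹ := by
            rw [ENNReal.ofReal_inv_of_pos (by norm_num), ENNReal.ofReal_ofNat]
          calc ∑' k : ℕ, ∫⁻ x in (ball cS (4 ^ (k + 1) * rS) \ ball cS (4 ^ k * rS)),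
                ENNReal.ofReal (ψ x) ∂μ
              ≤ ∑' k : ℕ, ENNReal.ofReal (6 * CK * Clam ^ 4) * ENNReal.ofReal 2⁻¹ ^ k :=
                ENNReal.tsum_le_tsum hann
            _ = ENNReal.ofReal (6 * CK * Clam ^ 4) * (1 - ENNReal.ofReal 2⁻¹)⁻¹ := by
                rw [ENNReal.tsum_mul_left, ENNReal.tsum_geometric]
            _ = ENNReal.ofReal (12 * CK * Clam ^ 4) := by
                rw [h2inv, ENNReal.one_sub_inv_two, inv_inv,
                  show (12 : ℝ) * CK * Clam ^ 4 = 6 * CK * Clam ^ 4 * 2 by ring,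
                  ENNReal.ofReal_mul (show (0:ℝ) ≤ 6 * CK * Clam ^ 4 by positivity),
                  ENNReal.ofReal_ofNat]
        · -- tail estimate via Hörmander condition
          set Φ : X → X → ℝ≥0∞ := fun x y =>
            ENNReal.ofReal (|K x y - K x cS| * |b y| * (dist x cS)⁻¹) with hΦdef
          have hTeq : ∀ x, Tail x = ∫⁻ y, Φ x y ∂μ := by
            intro x
            simp only [hTdef, hΦdef]
            rw [← lintegral_mul_const' _ _ ENNReal.ofReal_ne_top]
            exact lintegral_congr fun y => (ENNReal.ofReal_mul (by positivity)).symm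
          have hΦm : Measurable (Function.uncurry Φ) := by
            apply ENNReal.measurable_ofReal.comp
            exact (((hK.sub (hK.comp (measurable_fst.prodMk measurable_const))).abs.mul
              ((hbm.comp measurable_snd).abs)).mul
              (((continuous_id.dist continuous_const).measurable.inv).comp measurable_fst))
          calc ∫⁻ x in s, Tail x ∂μ = ∫⁻ x in s, ∫⁻ y, Φ x y ∂μ ∂μ := by
                simp only [hTeq]
            _ = ∫⁻ y, ∫⁻ x in s, Φ x y ∂μ ∂μ :=
                lintegral_lintegral_swap (hΦm.aemeasurable)
            _ ≤ ∫⁻ y, ENNReal.ofReal CK * ENNReal.ofReal |b y| ∂μ := by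
                refine lintegral_mono fun y => ?_
                by_cases hy : y ∈ ball cS rS
                · have hΦ2 : ∀ x, Φ x y = ENNReal.ofReal |b y| *
                      ENNReal.ofReal (|K x y - K x cS| * (dist x cS)⁻¹) := by
                    intro x
                    rw [hΦdef, ← ENNReal.ofReal_mul (abs_nonneg _)]
                    congr 1
                    ring
                  simp only [hΦ2]
                  rw [lintegral_const_mul' _ _ ENNReal.ofReal_ne_top, mul_comm
                    (ENNReal.ofReal CK)]
                  gcongr
                  have hsub : s ⊆ {x : X | 2 * dist cS y ≤ dist x cS} := by
                    intro x hx
                    have hd2r : 2 * rS ≤ dist x cS := not_lt.1 fun h => hx (mem_ball.2 h)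
                    have : dist cS y < rS := by rw [dist_comm]; exact mem_ball.1 hy
                    simp only [mem_setOf_eq]
                    linarith
                  refine (lintegral_mono_set hsub).trans ?_
                  refine le_trans (lintegral_mono fun x => ?_) (hreg cS y)
                  apply ENNReal.ofReal_le_ofReal
                  rcases eq_or_lt_of_le dist_nonneg (b := dist x cS) with h0 | h0
                  · rw [← h0]
                    simp
                  · rw [← div_eq_mul_inv, abs_sub_comm (K x y)]
                    exact (div_le_div_iff_of_pos_right h0).mpr
                      (le_add_of_nonneg_right (abs_nonneg _))
                · have hby : b y = 0 := by
                    by_contra h; exact hy (hbs h)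
                  simp [hΦdef, hby]
            _ = ENNReal.ofReal CK * L := lintegral_const_mul' _ _ ENNReal.ofReal_ne_top
    _ = ENNReal.ofReal (12 * CK * Clam ^ 4 + CK) * L := by
        rw [ENNReal.ofReal_add (by positivity) hCK.le, mul_comm L, add_mul]

/-- The standard estimate for the Marcinkiewicz integral of a function with vanishing
mean: if `b ∈ L¹(μ)` is supported in a ball `S` and `∫ b dμ = 0`, then
`∫_{X∖2S} M(b) dμ ≤ C ‖b‖_{L¹(μ)}`. -/
theorem marcinkiewicz_integral_outside_double
    {X : Type*} [MetricSpace X] [MeasurableSpace X] [BorelSpace X]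
    (μ : Measure X) (lam : X → ℝ → ℝ) (Clam : ℝ) (N0 : ℕ)
    (K : X → X → ℝ) (CK : ℝ) (hCK : 0 < CK)
    (hUD : IsUpperDoubling μ lam Clam) (hGD : GeometricallyDoubling X N0)
    (hK : Measurable (Function.uncurry K))
    (hsize : KernelSize lam K CK) (hreg : KernelReg μ K CK) :
    ∃ C : ℝ, 0 < C ∧ ∀ (cS : X) (rS : ℝ), 0 < rS →
      ∀ b : X → ℝ, Integrable b μ → Function.support b ⊆ ball cS rS →
        (∫ x, b x ∂μ) = 0 →
        ∫⁻ x in (ball cS (2 * rS))ᶜ, marcinkiewicz μ K b x ∂μ ≤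
          ENNReal.ofReal C * ∫⁻ x, ENNReal.ofReal |b x| ∂μ := by
  have hClam0 : (0 : ℝ) < Clam := lt_trans one_pos hUD.one_lt
  refine ⟨12 * CK * Clam ^ 4 + CK, by positivity, ?_⟩
  intro cS rS hr b hbi hbs hb0
  set b' : X → ℝ := (ball cS rS).indicator (hbi.1.mk b) with hb'def
  have hbeq : b =ᵐ[μ] b' := by
    filter_upwards [hbi.1.ae_eq_mk] with y hy
    rw [hb'def]
    by_cases hyb : y ∈ ball cS rS
    · rw [Set.indicator_of_mem hyb, ← hy]
    · rw [Set.indicator_of_notMem hyb]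
      by_contra h
      exact hyb (hbs h)
  have hbm' : Measurable b' :=
    (hbi.1.stronglyMeasurable_mk.measurable).indicator measurableSet_ball
  have hbi' : Integrable b' μ := hbi.congr hbeq
  have hbs' : Function.support b' ⊆ ball cS rS := by
    rw [hb'def]; exact Set.support_indicator_subset
  have hb0' : (∫ x, b' x ∂μ) = 0 := by
    rw [← integral_congr_ae hbeq, hb0]
  have hMeq : marcinkiewicz μ K b = marcinkiewicz μ K b' := by
    funext x
    unfold marcinkiewicz
    congr 1
    refine lintegral_congr fun t => ?_
    have h : (∫ y in {y : X | dist x y < t}, K x y * b y ∂μ)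
        = ∫ y in {y : X | dist x y < t}, K x y * b' y ∂μ :=
      integral_congr_ae (ae_restrict_of_ae (hbeq.mono fun y hy => by simp only [hy]))
    rw [h]
  have hLeq : (∫⁻ x, ENNReal.ofReal |b x| ∂μ) = ∫⁻ x, ENNReal.ofReal |b' x| ∂μ :=
    lintegral_congr_ae (hbeq.mono fun y hy => by simp only [hy])
  calc ∫⁻ x in (ball cS (2 * rS))ᶜ, marcinkiewicz μ K b x ∂μ
      = ∫⁻ x in (ball cS (2 * rS))ᶜ, marcinkiewicz μ K b' x ∂μ := by rw [hMeq]
    _ ≤ ENNReal.ofReal (12 * CK * Clam ^ 4 + CK) * ∫⁻ x, ENNReal.ofReal |b' x| ∂μ :=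
        marcinkiewicz_key μ lam Clam K CK hCK hUD hK hsize hreg cS rS hr b'
          hbm' hbi' hbs' hb0'
    _ = ENNReal.ofReal (12 * CK * Clam ^ 4 + CK) * ∫⁻ x, ENNReal.ofReal |b x| ∂μ := by
        rw [hLeq]

end NonHomog
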